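/- Let $f : \mathbb{R}^n \to \mathbb{R}$ be differentiable with $L$-Lipschitz gradient, let $r$ be convex, lsc, proper, and let $\Lambda$ be symmetric positive definite with $\lambda_M I \succeq \Lambda \succeq \lambda_m I$ ($0 < \lambda_m \le \lambda_M$). Define $F^\Lambda(x) := x - \mathrm{prox}^\Lambda_r(x - \Lambda^{-1}\nabla f(x))$. Then $F^\Lambda$ is Lipschitz continuous on $\mathbb{R}^n$ with modulus $1 + (\lambda_m^{-1}\lambda_M)^{1/2} + L(\lambda_m^{-3}\lambda_M)^{1/2}$. -/

import Mathlib

open scoped RealInnerProductSpace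

set_option maxHeartbeats 1000000

private lemma aux_le_zero {X C : ℝ} (hC : 0 ≤ C)
    (h : ∀ t : ℝ, 0 < t → t ≤ 1 → X ≤ t * C) : X ≤ 0 := by
  by_contra hX
  push_neg at hX
  rcases eq_or_lt_of_le hC with hC0 | hC0
  · have := h 1 one_pos le_rfl
    nlinarith
  · have ht : (0:ℝ) < min 1 (X / (2 * C)) := by
      apply lt_min one_pos
      positivity
    have := h _ ht (min_le_left _ _)
    have h2 : min 1 (X / (2 * C)) ≤ X / (2 * C) := min_le_right _ _
    have h3 : min 1 (X / (2 * C)) * C ≤ (X / (2 * C)) * C := by nlinarith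
    have h4 : (X / (2 * C)) * C = X / 2 := by field_simp
    nlinarith

/-- the natural residual `F^Λ(x) = x - prox^Λ_r (x - Λ⁻¹ ∇f(x))`
is Lipschitz with modulus `1 + (λ_m⁻¹ λ_M)^(1/2) + L (λ_m⁻³ λ_M)^(1/2)` when
`∇f` is `L`-Lipschitz and `λ_M I ⪰ Λ ⪰ λ_m I`. -/
theorem stmt5 (n : ℕ) (f : EuclideanSpace ℝ (Fin n) → ℝ)
    (gradf : EuclideanSpace ℝ (Fin n) → EuclideanSpace ℝ (Fin n))
    (hgrad : ∀ x, HasGradientAt f (gradf x) x)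
    (L : ℝ) (hL : 0 ≤ L)
    (hlip : ∀ x y, ‖gradf x - gradf y‖ ≤ L * ‖x - y‖)
    (r : EuclideanSpace ℝ (Fin n) → EReal)
    (hconv : ∀ x y : EuclideanSpace ℝ (Fin n), ∀ t : ℝ, 0 ≤ t → t ≤ 1 →
      r (t • x + (1 - t) • y) ≤ (t : EReal) * r x + ((1 - t : ℝ) : EReal) * r y)
    (hlsc : LowerSemicontinuous r)
    (hproper₁ : ∃ x, r x ≠ ⊤) (hproper₂ : ∀ x, r x ≠ ⊥)
    (Λ Λinv : EuclideanSpace ℝ (Fin n) →L[ℝ] EuclideanSpace ℝ (Fin n))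
    (hsymm : ∀ u v, ⟪Λ u, v⟫ = ⟪u, Λ v⟫)
    (hΛinv : ∀ u, Λ (Λinv u) = u ∧ Λinv (Λ u) = u)
    (lm lM : ℝ) (hlm : 0 < lm) (hlmM : lm ≤ lM)
    (hlow : ∀ u, lm * ‖u‖ ^ 2 ≤ ⟪u, Λ u⟫)
    (hupp : ∀ u, ⟪u, Λ u⟫ ≤ lM * ‖u‖ ^ 2)
    (prox : EuclideanSpace ℝ (Fin n) → EuclideanSpace ℝ (Fin n))
    (hprox : ∀ x y, r (prox x) + (((1 : ℝ) / 2 * ⟪x - prox x, Λ (x - prox x)⟫ : ℝ) : EReal)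
        ≤ r y + (((1 : ℝ) / 2 * ⟪x - y, Λ (x - y)⟫ : ℝ) : EReal)) :
    ∀ x y, ‖(x - prox (x - Λinv (gradf x))) - (y - prox (y - Λinv (gradf y)))‖ ≤
      (1 + Real.sqrt (lm⁻¹ * lM) + L * Real.sqrt ((lm ^ 3)⁻¹ * lM)) * ‖x - y‖ := by
  have hB : ∀ u v : EuclideanSpace ℝ (Fin n), ⟪v, Λ u⟫ = ⟪u, Λ v⟫ := by
    intro u v; rw [← hsymm]; exact real_inner_comm _ _
  have hexp : ∀ (u v : EuclideanSpace ℝ (Fin n)) (c : ℝ),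
      ⟪u - c•v, Λ (u - c•v)⟫ = ⟪u,Λ u⟫ - 2*c*⟪u,Λ v⟫ + c^2*⟪v,Λ v⟫ := by
    intro u v c
    simp only [inner_sub_left, inner_sub_right, map_sub, map_smul, real_inner_smul_left,
      real_inner_smul_right, hB u v]
    ring
  have hQ0 : ∀ u : EuclideanSpace ℝ (Fin n), 0 ≤ ⟪u, Λ u⟫ := fun u =>
    le_trans (by positivity) (hlow u)
  -- finiteness of r ∘ prox
  obtain ⟨x₀, hx₀⟩ := hproper₁
  have hfin : ∀ a, r (prox a) ≠ ⊤ := by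
    intro a ha
    have h := hprox a x₀
    rw [ha] at h
    rw [EReal.top_add_of_ne_bot (by exact_mod_cast EReal.coe_ne_bot _)] at h
    lift r x₀ to ℝ using ⟨hx₀, hproper₂ x₀⟩ with rx
    rw [show ((rx:EReal) + _ = ((rx + (1:ℝ)/2*⟪a - x₀, Λ (a - x₀)⟫ : ℝ) : EReal)) by norm_cast] at h
    exact ((EReal.coe_lt_top _).not_ge) h
  -- key variational inequality
  have hkey : ∀ a b, ⟪prox a - prox b, Λ (prox a - prox b)⟫ ≤ ⟪a - b, Λ (prox a - prox b)⟫ := by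
    have half : ∀ a b, (r (prox a)).toReal - (r (prox b)).toReal
        + ⟪a - prox a, Λ (prox b - prox a)⟫ ≤ 0 := by
      intro a b
      set p := prox a with hp
      set q := prox b with hq
      set rp := (r p).toReal with hrp
      set rq := (r q).toReal with hrq
      have hrpe : r p = (rp : EReal) := (EReal.coe_toReal (hfin a) (hproper₂ p)).symm
      have hrqe : r q = (rq : EReal) := (EReal.coe_toReal (hfin b) (hproper₂ q)).symm
      apply aux_le_zero (C := ⟪q - p, Λ (q - p)⟫ / 2) (by linarith [hQ0 (q - p)])
      intro t ht ht1
      set m := t • q + (1 - t) • p with hm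
      have hconvm : r m ≤ ((t * rq + (1 - t) * rp : ℝ) : EReal) := by
        have := hconv q p t ht.le ht1
        rw [hrpe, hrqe] at this
        calc r m ≤ (t : EReal) * (rq:EReal) + ((1 - t : ℝ) : EReal) * (rp:EReal) := this
          _ = _ := by norm_cast
      have h1 := hprox a m
      rw [hrpe] at h1
      have h2 : ((rp + (1:ℝ)/2 * ⟪a - p, Λ (a - p)⟫ : ℝ) : EReal)
          ≤ ((t * rq + (1 - t) * rp + (1:ℝ)/2 * ⟪a - m, Λ (a - m)⟫ : ℝ) : EReal) := by
        calc ((rp + (1:ℝ)/2 * ⟪a - p, Λ (a - p)⟫ : ℝ) : EReal)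
            = (rp : EReal) + (((1:ℝ)/2 * ⟪a - p, Λ (a - p)⟫ : ℝ) : EReal) := by norm_cast
          _ ≤ r m + (((1:ℝ)/2 * ⟪a - m, Λ (a - m)⟫ : ℝ) : EReal) := h1
          _ ≤ ((t * rq + (1 - t) * rp : ℝ) : EReal)
              + (((1:ℝ)/2 * ⟪a - m, Λ (a - m)⟫ : ℝ) : EReal) := add_le_add_left hconvm _
          _ = _ := by norm_cast
      have h3 : rp + (1:ℝ)/2 * ⟪a - p, Λ (a - p)⟫
          ≤ t * rq + (1 - t) * rp + (1:ℝ)/2 * ⟪a - m, Λ (a - m)⟫ := by exact_mod_cast h2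
      have ham : a - m = (a - p) - t • (q - p) := by
        rw [hm]; module
      rw [ham, hexp (a - p) (q - p) t] at h3
      have h4 : t * (rp - rq + ⟪a - p, Λ (q - p)⟫) ≤ t * (t * (⟪q - p, Λ (q - p)⟫ / 2)) := by
        nlinarith [h3]
      exact le_of_mul_le_mul_left h4 ht
    intro a b
    have h1 := half a b
    have h2 := half b a
    set p := prox a
    set q := prox b
    have e1 : ⟪a - p, Λ (q - p)⟫ = ⟪a, Λ q⟫ - ⟪a, Λ p⟫ - ⟪p, Λ q⟫ + ⟪p, Λ p⟫ := by
      simp only [inner_sub_left, inner_sub_right, map_sub]; ring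
    have e2 : ⟪b - q, Λ (p - q)⟫ = ⟪b, Λ p⟫ - ⟪b, Λ q⟫ - ⟪q, Λ p⟫ + ⟪q, Λ q⟫ := by
      simp only [inner_sub_left, inner_sub_right, map_sub]; ring
    have e3 : ⟪p - q, Λ (p - q)⟫ = ⟪p, Λ p⟫ - ⟪p, Λ q⟫ - ⟪q, Λ p⟫ + ⟪q, Λ q⟫ := by
      simp only [inner_sub_left, inner_sub_right, map_sub]; ring
    have e4 : ⟪a - b, Λ (p - q)⟫ = ⟪a, Λ p⟫ - ⟪a, Λ q⟫ - ⟪b, Λ p⟫ + ⟪b, Λ q⟫ := by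
      simp only [inner_sub_left, inner_sub_right, map_sub]; ring
    linarith [hB p q]
  -- nonexpansiveness in Euclidean norm with modulus sqrt(lm⁻¹ lM)
  have hnon : ∀ a b, ‖prox a - prox b‖ ≤ Real.sqrt (lm⁻¹ * lM) * ‖a - b‖ := by
    intro a b
    set p := prox a
    set q := prox b
    set w := p - q with hw
    set d := a - b with hd
    by_cases hw0 : w = 0
    · rw [hw0, norm_zero]
      exact mul_nonneg (Real.sqrt_nonneg _) (norm_nonneg _)
    · have hQw : 0 < ⟪w, Λ w⟫ := by
        have := hlow w
        have : (0:ℝ) < lm * ‖w‖ ^ 2 := by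
          have := norm_pos_iff.mpr hw0
          positivity
        linarith [hlow w]
      have hkey' : ⟪w, Λ w⟫ ≤ ⟪d, Λ w⟫ := hkey a b
      -- Cauchy-Schwarz for Λ
      have hcs : ⟪d, Λ w⟫ ^ 2 ≤ ⟪d, Λ d⟫ * ⟪w, Λ w⟫ := by
        have h0 := hQ0 ((⟪w, Λ w⟫ : ℝ) • d - (⟪d, Λ w⟫ : ℝ) • w)
        rw [hexp ((⟪w, Λ w⟫ : ℝ) • d) w (⟪d, Λ w⟫)] at h0
        have e1 : ⟪(⟪w, Λ w⟫ : ℝ) • d, Λ ((⟪w, Λ w⟫ : ℝ) • d)⟫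
            = ⟪w, Λ w⟫ ^ 2 * ⟪d, Λ d⟫ := by
          rw [map_smul, real_inner_smul_left, real_inner_smul_right]; ring
        have e2 : ⟪(⟪w, Λ w⟫ : ℝ) • d, Λ w⟫ = ⟪w, Λ w⟫ * ⟪d, Λ w⟫ := by
          rw [real_inner_smul_left]
        rw [e1, e2] at h0
        nlinarith [h0, hQw]
      have hQQ : ⟪w, Λ w⟫ ≤ ⟪d, Λ d⟫ := by
        nlinarith [hkey', hcs, hQw, hQ0 d]
      have hn2 : ‖w‖ ^ 2 ≤ lm⁻¹ * lM * ‖d‖ ^ 2 := by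
        have h1 := hlow w
        have h2 := hupp d
        have h3 : lm * ‖w‖ ^ 2 ≤ lM * ‖d‖ ^ 2 := by linarith
        have h4 : lm⁻¹ * lM * ‖d‖ ^ 2 = (lM * ‖d‖ ^ 2) / lm := by
          field_simp
        rw [h4, le_div_iff₀ hlm]
        nlinarith [h3]
      calc ‖w‖ = Real.sqrt (‖w‖ ^ 2) := (Real.sqrt_sq (norm_nonneg _)).symm
        _ ≤ Real.sqrt (lm⁻¹ * lM * ‖d‖ ^ 2) := Real.sqrt_le_sqrt hn2
        _ = Real.sqrt (lm⁻¹ * lM) * ‖d‖ := by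
            rw [Real.sqrt_mul (mul_nonneg (inv_nonneg.mpr hlm.le) (by linarith)),
              Real.sqrt_sq (norm_nonneg _)]
  -- Λinv is Lipschitz with constant lm⁻¹
  have hinv : ∀ w, ‖Λinv w‖ ≤ lm⁻¹ * ‖w‖ := by
    intro w
    set v := Λinv w with hv
    have hΛv : Λ v = w := (hΛinv w).1
    have h1 : lm * ‖v‖ ^ 2 ≤ ⟪v, w⟫ := by rw [← hΛv]; exact hlow v
    have h2 : ⟪v, w⟫ ≤ ‖v‖ * ‖w‖ := real_inner_le_norm _ _
    rcases eq_or_lt_of_le (norm_nonneg v) with h | h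
    · rw [← h]; positivity
    · have h3 : lm * ‖v‖ ≤ ‖w‖ := by nlinarith
      rw [inv_mul_eq_div, le_div_iff₀ hlm]
      nlinarith
  intro x y
  set a := x - Λinv (gradf x) with ha
  set b := y - Λinv (gradf y) with hb
  have hab : ‖a - b‖ ≤ (1 + lm⁻¹ * L) * ‖x - y‖ := by
    have e : a - b = (x - y) - Λinv (gradf x - gradf y) := by
      rw [ha, hb, map_sub]; abel
    rw [e]
    calc ‖(x - y) - Λinv (gradf x - gradf y)‖
        ≤ ‖x - y‖ + ‖Λinv (gradf x - gradf y)‖ := norm_sub_le _ _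
      _ ≤ ‖x - y‖ + lm⁻¹ * ‖gradf x - gradf y‖ := by linarith [hinv (gradf x - gradf y)]
      _ ≤ ‖x - y‖ + lm⁻¹ * (L * ‖x - y‖) := by
          have := hlip x y
          have h0 : (0:ℝ) ≤ lm⁻¹ := by positivity
          nlinarith
      _ = (1 + lm⁻¹ * L) * ‖x - y‖ := by ring
  have hsplit : ‖(x - prox a) - (y - prox b)‖ ≤ ‖x - y‖ + ‖prox a - prox b‖ := by
    have e : (x - prox a) - (y - prox b) = (x - y) - (prox a - prox b) := by abel
    rw [e]; exact norm_sub_le _ _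
  have hsqrt3 : Real.sqrt ((lm ^ 3)⁻¹ * lM) = lm⁻¹ * Real.sqrt (lm⁻¹ * lM) := by
    have e : (lm ^ 3)⁻¹ * lM = (lm⁻¹) ^ 2 * (lm⁻¹ * lM) := by
      rw [← inv_pow, pow_succ]; ring
    rw [e, Real.sqrt_mul (by positivity), Real.sqrt_sq (by positivity)]

  have hpq := hnon a b
  have hs0 : (0:ℝ) ≤ Real.sqrt (lm⁻¹ * lM) := Real.sqrt_nonneg _
  have hxy0 : (0:ℝ) ≤ ‖x - y‖ := norm_nonneg _
  rw [hsqrt3]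
  have : ‖prox a - prox b‖ ≤ Real.sqrt (lm⁻¹ * lM) * ((1 + lm⁻¹ * L) * ‖x - y‖) := by
    calc ‖prox a - prox b‖ ≤ Real.sqrt (lm⁻¹ * lM) * ‖a - b‖ := hpq
      _ ≤ Real.sqrt (lm⁻¹ * lM) * ((1 + lm⁻¹ * L) * ‖x - y‖) := by
          apply mul_le_mul_of_nonneg_left hab hs0
  have e : (1 + Real.sqrt (lm⁻¹ * lM) + L * (lm⁻¹ * Real.sqrt (lm⁻¹ * lM))) * ‖x - y‖
      = ‖x - y‖ + Real.sqrt (lm⁻¹ * lM) * ((1 + lm⁻¹ * L) * ‖x - y‖) := by ring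
  rw [e]
  linarith
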